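/- Let G be a finite group. If a and b are distinct elements adjacent in the enhanced power graph P_e(G), i.e., a, b ∈ ⟨c⟩ for some c, then in the non-cyclic case N_c ≥ max{N_a, N_b} and c is adjacent in the power graph to both a and b. -/

import Mathlib

def padj {G : Type*} [Group G] (a b : G) : Prop :=
  a ≠ b ∧ (Subgroup.zpowers a ≤ Subgroup.zpowers b ∨ Subgroup.zpowers b ≤ Subgroup.zpowers a)

def pnbhd {G : Type*} [Group G] (a : G) : Set G := {x | padj a x}

def closedTwins {G : Type*} [Group G] (a : G) : Set G :=
  {b | padj a b ∧ pnbhd a \ {b} = pnbhd b \ {a}}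

noncomputable def Ncount {G : Type*} [Group G] (a : G) : ℕ := (closedTwins a).ncard + 1

def eadj {G : Type*} [Group G] (a b : G) : Prop :=
  a ≠ b ∧ ∃ c : G, a ∈ Subgroup.zpowers c ∧ b ∈ Subgroup.zpowers c

set_option linter.unusedSectionVars false
set_option linter.unusedVariables false
set_option linter.unnecessarySimpa false
set_option maxHeartbeats 1000000

open Subgroup

section Aux

variable {G : Type*} [Group G] [Finite G]

def Nbar (x : G) : Set G := {w | zpowers w ≤ zpowers x ∨ zpowers x ≤ zpowers w}

lemma mem_Nbar_self (x : G) : x ∈ Nbar x := Or.inl le_rfl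

lemma Nbar_congr {x y : G} (h : zpowers x = zpowers y) : Nbar x = Nbar y := by
  unfold Nbar; rw [h]

def cls (x : G) : Set G := {y | Nbar y = Nbar x}

lemma mem_cls_self (x : G) : x ∈ cls x := rfl

lemma pnbhd_eq (a : G) : pnbhd a = Nbar a \ {a} := by
  ext x
  simp only [pnbhd, padj, Set.mem_setOf_eq, Nbar, Set.mem_diff, Set.mem_singleton_iff]
  constructor
  · rintro ⟨h1, h2⟩; exact ⟨h2.symm, fun h => h1 h.symm⟩
  · rintro ⟨h2, h1⟩; exact ⟨fun h => h1 h.symm, h2.symm⟩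

lemma closedTwins_eq (a : G) : closedTwins a = cls a \ {a} := by
  ext b
  simp only [closedTwins, Set.mem_setOf_eq, cls, Set.mem_diff, Set.mem_singleton_iff]
  constructor
  · rintro ⟨⟨hne, hcmp⟩, hnb⟩
    rw [pnbhd_eq, pnbhd_eq, Set.diff_diff, Set.diff_diff] at hnb
    refine ⟨?_, fun h => hne h.symm⟩
    ext w
    by_cases hwa : w = a
    · subst hwa
      exact ⟨fun _ => mem_Nbar_self w, fun _ => hcmp⟩
    by_cases hwb : w = b
    · subst hwb
      exact ⟨fun _ => hcmp.symm, fun _ => mem_Nbar_self w⟩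
    have hw : w ∉ ({a} ∪ {b} : Set G) := by
      simp [hwa, hwb]
    have hw' : w ∉ ({b} ∪ {a} : Set G) := by
      simp [hwa, hwb]
    constructor
    · intro h
      have : w ∈ Nbar a \ ({a} ∪ {b}) := by rw [hnb]; exact ⟨h, hw'⟩
      exact this.1
    · intro h
      have : w ∈ Nbar b \ ({b} ∪ {a}) := by rw [← hnb]; exact ⟨h, hw⟩
      exact this.1
  · rintro ⟨hN, hne⟩
    have hb : b ∈ Nbar a := hN ▸ mem_Nbar_self b
    refine ⟨⟨fun h => hne h.symm, hb.symm⟩, ?_⟩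
    rw [pnbhd_eq, pnbhd_eq, Set.diff_diff, Set.diff_diff, hN, Set.union_comm]

lemma Ncount_eq (a : G) : Ncount a = (cls a).ncard := by
  rw [Ncount, closedTwins_eq]
  exact Set.ncard_diff_singleton_add_one (mem_cls_self a) (Set.toFinite _)

end Aux

section Aux

variable {G : Type*} [Group G] [Finite G]

lemma zpowers_isCyclic (c : G) : IsCyclic ↥(zpowers c) := by
  refine ⟨⟨⟨c, mem_zpowers c⟩, fun x => ?_⟩⟩
  obtain ⟨k, hk⟩ := x.2
  exact ⟨k, by ext; simpa using hk⟩

lemma card_pow_eq_one_set_le (c : G) {d : ℕ} (hd : 0 < d) :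
    {g : G | g ∈ zpowers c ∧ g ^ d = 1}.ncard ≤ d := by
  haveI := Fintype.ofFinite ↥(zpowers c)
  haveI := zpowers_isCyclic c
  classical
  have key := IsCyclic.card_pow_eq_one_le (α := ↥(zpowers c)) (n := d) hd
  have himg : {g : G | g ∈ zpowers c ∧ g ^ d = 1} =
      ((↑) : ↥(zpowers c) → G) '' {h | h ^ d = 1} := by
    ext g
    constructor
    · rintro ⟨hg, hpow⟩
      exact ⟨⟨g, hg⟩, Subtype.ext (by simp [hpow]), rfl⟩
    · rintro ⟨h, hh, rfl⟩
      refine ⟨h.2, ?_⟩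
      have := congrArg (Subtype.val) hh
      simpa using this
  rw [himg, Set.ncard_image_of_injective _ Subtype.coe_injective]
  have hconv : ({h : ↥(zpowers c) | h ^ d = 1}).ncard
      = Finset.card ({a : ↥(zpowers c) | a ^ d = 1} : Finset _) := by
    rw [← Set.ncard_coe_finset]
    congr 1
    ext h
    simp
  rw [hconv]
  exact key

lemma mem_zpowers_of_orderOf_dvd {c x y : G} (hx : x ∈ zpowers c) (hy : y ∈ zpowers c)
    (hdvd : orderOf x ∣ orderOf y) : x ∈ zpowers y := by
  set d := orderOf y with hd
  have hd0 : 0 < d := (isOfFinOrder_of_finite y).orderOf_pos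
  have hsub : (zpowers y : Set G) ⊆ {g : G | g ∈ zpowers c ∧ g ^ d = 1} := by
    intro g hg
    have hg' : g ∈ zpowers y := hg
    exact ⟨zpowers_le.mpr hy hg',
      orderOf_dvd_iff_pow_eq_one.mp (orderOf_dvd_of_mem_zpowers hg')⟩
  have hcard : d ≤ (zpowers y : Set G).ncard := by
    rw [← Nat.card_coe_set_eq, SetLike.coe_sort_coe, Nat.card_zpowers]
  have hEq : (zpowers y : Set G) = {g : G | g ∈ zpowers c ∧ g ^ d = 1} :=
    Set.eq_of_subset_of_ncard_le hsub ((card_pow_eq_one_set_le c hd0).trans hcard)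
      (Set.toFinite _)
  have hxS : x ∈ {g : G | g ∈ zpowers c ∧ g ^ d = 1} :=
    ⟨hx, orderOf_dvd_iff_pow_eq_one.mp hdvd⟩
  rw [← hEq] at hxS
  exact hxS

lemma ncard_gens (c : G) : {y : G | zpowers y = zpowers c}.ncard = (orderOf c).totient := by
  haveI := Fintype.ofFinite ↥(zpowers c)
  haveI := zpowers_isCyclic c
  classical
  have hcardH : Fintype.card ↥(zpowers c) = orderOf c := by
    rw [← Nat.card_eq_fintype_card, Nat.card_zpowers]
  have himg : {y : G | zpowers y = zpowers c} =
      ((↑) : ↥(zpowers c) → G) '' {h | orderOf h = orderOf c} := by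
    ext y
    constructor
    · intro hy
      have hyc : y ∈ zpowers c := hy ▸ mem_zpowers y
      refine ⟨⟨y, hyc⟩, ?_, rfl⟩
      have hord : orderOf y = orderOf c := by
        rw [← Nat.card_zpowers, hy, Nat.card_zpowers]
      simpa [orderOf_mk] using hord
    · rintro ⟨h, hh, rfl⟩
      have hord : orderOf (h : G) = orderOf c := by rw [orderOf_coe]; exact hh
      exact Subgroup.eq_of_le_of_card_ge (zpowers_le.mpr h.2)
        (by rw [Nat.card_zpowers, Nat.card_zpowers, hord])
  rw [himg, Set.ncard_image_of_injective _ Subtype.coe_injective]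
  have key := IsCyclic.card_orderOf_eq_totient (α := ↥(zpowers c)) (d := orderOf c)
    (by rw [hcardH])
  have hconv : ({h : ↥(zpowers c) | orderOf h = orderOf c}).ncard
      = Finset.card ({a : ↥(zpowers c) | orderOf a = orderOf c} : Finset _) := by
    rw [← Set.ncard_coe_finset]
    congr 1
    ext h
    simp
  rw [hconv]
  exact key

lemma exists_orderOf_eq_of_dvd {c : G} {d : ℕ} (hd : d ∣ orderOf c) :
    ∃ z ∈ zpowers c, orderOf z = d := by
  refine ⟨c ^ (orderOf c / d), ⟨((orderOf c / d : ℕ) : ℤ), by simpa using zpow_natCast c (orderOf c / d)⟩, ?_⟩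
  exact orderOf_pow_orderOf_div ((isOfFinOrder_of_finite c).orderOf_pos).ne' hd

end Aux

lemma divisor_chain_prime_pow {m n : ℕ} (h1 : 1 < m) (hmn : m < n) (hdvd : m ∣ n)
    (H : ∀ d, d ∣ n → d ∣ m ∨ m ∣ d) : ∃ p r, p.Prime ∧ 0 < r ∧ n = p ^ r := by
  have hn0 : n ≠ 0 := by omega
  have hqm : ∀ q, q.Prime → q ∣ n → q ∣ m := by
    intro q hq hqn
    rcases H q hqn with h | h
    · exact h
    · rcases (Nat.dvd_prime hq).mp h with h1' | h2'
      · omega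
      · exact h2' ▸ dvd_rfl
  have hex : ∃ q, q.Prime ∧ q ∣ n ∧ m ∣ q ^ n.factorization q := by
    by_contra hcon
    push_neg at hcon
    have hnm : n ∣ m := by
      rw [Nat.dvd_iff_prime_pow_dvd_dvd]
      intro p k hp hpk
      have hp' : p.Prime := hp
      by_cases hk : k = 0
      · subst hk; simpa using one_dvd m
      have hpn : p ∣ n := dvd_trans (dvd_pow_self p hk) hpk
      have hfac : k ≤ n.factorization p :=
        (Nat.Prime.pow_dvd_iff_le_factorization hp' hn0).mp hpk
      have hproj : p ^ n.factorization p ∣ m := by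
        rcases H _ (Nat.ordProj_dvd n p) with h | h
        · exact h
        · exact absurd h (hcon p hp' hpn)
      exact dvd_trans (pow_dvd_pow p hfac) hproj
    have := Nat.le_of_dvd (by omega) hnm
    omega
  obtain ⟨q, hq, hqn, hmq⟩ := hex
  have huniq : ∀ {d : ℕ}, d.Prime → d ∣ n → d = q := by
    intro d hdp hdn
    have hdm : d ∣ q ^ n.factorization q := (hqm d hdp hdn).trans hmq
    exact (Nat.prime_dvd_prime_iff_eq hdp hq).mp (hdp.dvd_of_dvd_pow hdm)
  have hpow := Nat.eq_prime_pow_of_unique_prime_dvd hn0 huniq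
  have hlen : 0 < n.primeFactorsList.length := by
    rcases Nat.eq_zero_or_pos (n.primeFactorsList.length) with hz | h
    · rw [hz, pow_zero] at hpow; omega
    · exact h
  exact ⟨q, _, hq, hlen, hpow⟩

section Grp

variable {G : Type*} [Group G] [Finite G]

lemma exists_orderOf_eq_of_dvd' {c : G} {d : ℕ} (hd : d ∣ orderOf c) :
    ∃ z ∈ zpowers c, orderOf z = d := by
  refine ⟨c ^ (orderOf c / d), ⟨((orderOf c / d : ℕ) : ℤ),
    by simpa using zpow_natCast c (orderOf c / d)⟩, ?_⟩
  exact orderOf_pow_orderOf_div ((isOfFinOrder_of_finite c).orderOf_pos).ne' hd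

lemma prime_eq_of_dominating (hnc : ¬ IsCyclic G) {t : G}
    (hdom : ∀ w : G, zpowers w ≤ zpowers t ∨ zpowers t ≤ zpowers w)
    {p q : ℕ} (hp : p.Prime) (hq : q.Prime) (hpm : p ∣ orderOf t) (hqm : q ∣ orderOf t) :
    p = q := by
  by_contra hne
  apply hnc
  refine ⟨⟨t, fun g => ?_⟩⟩
  show g ∈ zpowers t
  rcases hdom g with h | h
  · exact h (mem_zpowers g)
  · set m₂ := orderOf t with hm₂def
    set M := orderOf g with hMdef
    have hm2M : m₂ ∣ M := orderOf_dvd_of_mem_zpowers (h (mem_zpowers t))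
    have hM0 : M ≠ 0 := ((isOfFinOrder_of_finite g).orderOf_pos).ne'
    have hm20 : m₂ ≠ 0 := ((isOfFinOrder_of_finite t).orderOf_pos).ne'
    by_cases heq : m₂ = M
    · have : zpowers t = zpowers g := Subgroup.eq_of_le_of_card_ge h
        (by rw [Nat.card_zpowers, Nat.card_zpowers]; omega)
      rw [this]; exact mem_zpowers g
    · exfalso
      obtain ⟨s, hs⟩ := hm2M
      have hs1 : s ≠ 1 := fun h1 => heq (by rw [hs, h1, mul_one])
      have hs0 : s ≠ 0 := fun h0 => hM0 (by rw [hs, h0, mul_zero])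
      have hℓ : (s.minFac).Prime := Nat.minFac_prime hs1
      set ℓ := s.minFac
      set j := m₂.factorization ℓ with hjdef
      have hdvd : ℓ ^ (j + 1) ∣ M := by
        rw [hs, pow_succ]
        exact mul_dvd_mul (Nat.ordProj_dvd m₂ ℓ) (Nat.minFac_dvd s)
      obtain ⟨w, hwg, hword⟩ := exists_orderOf_eq_of_dvd' (c := g) hdvd
      rcases hdom w with hw | hw
      · have : ℓ ^ (j+1) ∣ m₂ := hword ▸ orderOf_dvd_of_mem_zpowers (hw (mem_zpowers w))
        exact Nat.pow_succ_factorization_not_dvd hm20 hℓ this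
      · have hm2d : m₂ ∣ ℓ ^ (j+1) := by
          have := orderOf_dvd_of_mem_zpowers (hw (mem_zpowers t))
          rwa [hword] at this
        have hpℓ : p = ℓ := (Nat.prime_dvd_prime_iff_eq hp hℓ).mp
          (hp.dvd_of_dvd_pow (hpm.trans hm2d))
        have hqℓ : q = ℓ := (Nat.prime_dvd_prime_iff_eq hq hℓ).mp
          (hq.dvd_of_dvd_pow (hqm.trans hm2d))
        exact hne (hpℓ.trans hqℓ.symm)

lemma orderOf_prime_pow_of_dominating (hnc : ¬ IsCyclic G) {t : G}
    (hdom : ∀ w : G, zpowers w ≤ zpowers t ∨ zpowers t ≤ zpowers w)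
    (h1 : 1 < orderOf t) : ∃ p r, p.Prime ∧ 0 < r ∧ orderOf t = p ^ r := by
  have hm20 : orderOf t ≠ 0 := by omega
  have hp : (orderOf t).minFac.Prime := Nat.minFac_prime (by omega)
  have huniq : ∀ {d : ℕ}, d.Prime → d ∣ orderOf t → d = (orderOf t).minFac := fun hd hdm =>
    prime_eq_of_dominating hnc hdom hd hp hdm (Nat.minFac_dvd _)
  have hpow := Nat.eq_prime_pow_of_unique_prime_dvd hm20 huniq
  have hlen : 0 < (orderOf t).primeFactorsList.length := by
    rcases Nat.eq_zero_or_pos ((orderOf t).primeFactorsList.length) with hz | h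
    · rw [hz, pow_zero] at hpow; omega
    · exact h
  exact ⟨_, _, hp, hlen, hpow⟩

end Grp

section Main

variable {G : Type*} [Group G] [Finite G]

lemma Ncount_mono (hnc : ¬ IsCyclic G) {a c : G} (ha : a ∈ zpowers c) :
    Ncount a ≤ Ncount c := by
  rw [Ncount_eq, Ncount_eq]
  by_cases hN : Nbar a = Nbar c
  · have : cls a = cls c := by unfold cls; rw [hN]
    rw [this]
  have hle_ac : zpowers a ≤ zpowers c := zpowers_le.mpr ha
  obtain ⟨t₂, ht₂mem, ht₂max⟩ := Set.Finite.exists_maximalFor orderOf (cls a)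
    (Set.toFinite _) ⟨a, mem_cls_self a⟩
  have hNt₂ : Nbar t₂ = Nbar a := ht₂mem
  have horder_pos : ∀ x : G, 0 < orderOf x := fun x => (isOfFinOrder_of_finite x).orderOf_pos
  have hmemz : ∀ t ∈ cls a, t ∈ zpowers t₂ := by
    intro t ht
    have htN : t ∈ Nbar t₂ := by
      rw [hNt₂, ← ht]
      exact mem_Nbar_self t
    rcases htN with h | h
    · exact h (mem_zpowers t)
    · have hdvd := orderOf_dvd_of_mem_zpowers (h (mem_zpowers t₂))
      have hle := Nat.le_of_dvd (horder_pos t) hdvd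
      have heq := ht₂max ht hle
      have hEq : zpowers t₂ = zpowers t := Subgroup.eq_of_le_of_card_ge h
        (by rw [Nat.card_zpowers, Nat.card_zpowers]; omega)
      rw [hEq]; exact mem_zpowers t
  have hcN : c ∈ Nbar t₂ := by rw [hNt₂]; exact Or.inr hle_ac
  rcases hcN with hc1 | hc2
  · -- case ⟨c⟩ ≤ ⟨t₂⟩ : impossible
    exfalso
    have hnecz : zpowers c ≠ zpowers t₂ := by
      intro h
      exact hN ((Nbar_congr h).trans hNt₂).symm
    have hdvdc : orderOf c ∣ orderOf t₂ := orderOf_dvd_of_mem_zpowers (hc1 (mem_zpowers c))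
    have hnlt : orderOf c < orderOf t₂ := by
      have hle := Nat.le_of_dvd (horder_pos t₂) hdvdc
      rcases lt_or_eq_of_le hle with h | h
      · exact h
      · exact absurd (Subgroup.eq_of_le_of_card_ge hc1
          (by rw [Nat.card_zpowers, Nat.card_zpowers]; omega)) hnecz
    have hpp : ∃ p r, p.Prime ∧ 0 < r ∧ orderOf t₂ = p ^ r := by
      by_cases h1 : orderOf a = 1
      · have ha1 : a = 1 := orderOf_eq_one_iff.mp h1
        have hdom : ∀ w : G, zpowers w ≤ zpowers t₂ ∨ zpowers t₂ ≤ zpowers w := by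
          intro w
          have hw : w ∈ Nbar a := by rw [ha1]; exact Or.inr (zpowers_le.mpr (one_mem _))
          rw [← hNt₂] at hw; exact hw
        refine orderOf_prime_pow_of_dominating hnc hdom ?_
        have := horder_pos c; omega
      · apply divisor_chain_prime_pow (m := orderOf a) (n := orderOf t₂)
        · have := horder_pos a; omega
        · have hdvd := orderOf_dvd_of_mem_zpowers ha
          have := Nat.le_of_dvd (horder_pos c) hdvd
          omega
        · exact dvd_trans (orderOf_dvd_of_mem_zpowers ha) hdvdc
        · intro d hd
          obtain ⟨z, hz, hzord⟩ := exists_orderOf_eq_of_dvd' (c := t₂) hd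
          have hzN : z ∈ Nbar a := by rw [← hNt₂]; exact Or.inl (zpowers_le.mpr hz)
          rcases hzN with h | h
          · left; rw [← hzord]; exact orderOf_dvd_of_mem_zpowers (h (mem_zpowers z))
          · right; rw [← hzord]; exact orderOf_dvd_of_mem_zpowers (h (mem_zpowers a))
    obtain ⟨p, r, hp, hr, hm₂⟩ := hpp
    have hcz : c ∈ zpowers t₂ := hc1 (mem_zpowers c)
    have haz : a ∈ zpowers t₂ := (hle_ac.trans hc1) (mem_zpowers a)
    have hkey : ∀ u v : G, u ∈ zpowers t₂ → v ∈ zpowers t₂ →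
        zpowers u ≤ zpowers v ∨ zpowers v ≤ zpowers u := by
      intro u v hu hv
      obtain ⟨i, hi, hiu⟩ := (Nat.dvd_prime_pow hp).mp
        (hm₂ ▸ orderOf_dvd_of_mem_zpowers hu)
      obtain ⟨k, hk, hkv⟩ := (Nat.dvd_prime_pow hp).mp
        (hm₂ ▸ orderOf_dvd_of_mem_zpowers hv)
      rcases le_total i k with h | h
      · left; exact zpowers_le.mpr (mem_zpowers_of_orderOf_dvd hu hv
          (by rw [hiu, hkv]; exact pow_dvd_pow p h))
      · right; exact zpowers_le.mpr (mem_zpowers_of_orderOf_dvd hv hu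
          (by rw [hiu, hkv]; exact pow_dvd_pow p h))
    have hNac : Nbar c = Nbar a := by
      ext w
      constructor
      · intro hw
        rcases hw with h | h
        · exact hkey w a (hc1 (h (mem_zpowers w))) haz
        · exact Or.inr (hle_ac.trans h)
      · intro hw
        rw [← hNt₂] at hw
        rcases hw with h | h
        · exact hkey w c (h (mem_zpowers w)) hcz
        · exact Or.inr (hc1.trans h)
    exact hN hNac.symm
  · -- case ⟨t₂⟩ ≤ ⟨c⟩
    by_cases heqz : zpowers t₂ = zpowers c
    · exact absurd ((Nbar_congr heqz).symm.trans hNt₂).symm hN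
    have hm₂n : orderOf t₂ ∣ orderOf c := orderOf_dvd_of_mem_zpowers (hc2 (mem_zpowers t₂))
    have hm₂lt : orderOf t₂ < orderOf c := by
      have hle := Nat.le_of_dvd (horder_pos c) hm₂n
      rcases lt_or_eq_of_le hle with h | h
      · exact h
      · exact absurd (Subgroup.eq_of_le_of_card_ge hc2
          (by rw [Nat.card_zpowers, Nat.card_zpowers]; omega)) heqz
    have hclsc : (orderOf c).totient ≤ (cls c).ncard := by
      have hsub : {y : G | zpowers y = zpowers c} ⊆ cls c := fun y hy => Nbar_congr hy
      calc (orderOf c).totient = {y : G | zpowers y = zpowers c}.ncard := (ncard_gens c).symm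
        _ ≤ (cls c).ncard := Set.ncard_le_ncard hsub (Set.toFinite _)
    by_cases hall : ∀ t ∈ cls a, zpowers t = zpowers t₂
    · have hsub : cls a ⊆ {y : G | zpowers y = zpowers t₂} := hall
      have h1 : (cls a).ncard ≤ (orderOf t₂).totient := by
        rw [← ncard_gens t₂]; exact Set.ncard_le_ncard hsub (Set.toFinite _)
      have h2 : (orderOf t₂).totient ≤ (orderOf c).totient :=
        Nat.le_of_dvd (Nat.totient_pos.mpr (horder_pos c)) (Nat.totient_dvd_of_dvd hm₂n)
      omega
    · push_neg at hall
      obtain ⟨t₁, ht₁, ht₁ne⟩ := hall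
      have hNt₁ : Nbar t₁ = Nbar a := ht₁
      have ht₁z : t₁ ∈ zpowers t₂ := hmemz t₁ ht₁
      have hm₁dvd : orderOf t₁ ∣ orderOf t₂ := orderOf_dvd_of_mem_zpowers ht₁z
      have hm₁lt : orderOf t₁ < orderOf t₂ := by
        have hle := Nat.le_of_dvd (horder_pos t₂) hm₁dvd
        rcases lt_or_eq_of_le hle with h | h
        · exact h
        · exact absurd (Subgroup.eq_of_le_of_card_ge (zpowers_le.mpr ht₁z)
            (by rw [Nat.card_zpowers, Nat.card_zpowers]; omega)) ht₁ne
      have hpp : ∃ p r, p.Prime ∧ 0 < r ∧ orderOf t₂ = p ^ r := by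
        by_cases h1 : orderOf t₁ = 1
        · have ht₁1 : t₁ = 1 := orderOf_eq_one_iff.mp h1
          have hdom : ∀ w : G, zpowers w ≤ zpowers t₂ ∨ zpowers t₂ ≤ zpowers w := by
            intro w
            have hw : w ∈ Nbar t₁ := by rw [ht₁1]; exact Or.inr (zpowers_le.mpr (one_mem _))
            rw [hNt₁, ← hNt₂] at hw; exact hw
          exact orderOf_prime_pow_of_dominating hnc hdom (by omega)
        · apply divisor_chain_prime_pow (m := orderOf t₁) (n := orderOf t₂)
          · have := horder_pos t₁; omega
          · exact hm₁lt
          · exact hm₁dvd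
          · intro d hd
            obtain ⟨z, hz, hzord⟩ := exists_orderOf_eq_of_dvd' (c := t₂) hd
            have hzN : z ∈ Nbar t₁ := by
              rw [hNt₁, ← hNt₂]; exact Or.inl (zpowers_le.mpr hz)
            rcases hzN with h | h
            · left; rw [← hzord]; exact orderOf_dvd_of_mem_zpowers (h (mem_zpowers z))
            · right; rw [← hzord]; exact orderOf_dvd_of_mem_zpowers (h (mem_zpowers t₁))
      obtain ⟨p, r, hp, hr, hm₂⟩ := hpp
      have hqp : ∀ {q : ℕ}, q.Prime → q ∣ orderOf c → q = p := by
        intro q hq hqn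
        by_contra hqne
        have hm₁p : orderOf t₁ ∣ p ^ r := hm₂ ▸ hm₁dvd
        have hcop : Nat.Coprime q (orderOf t₁) :=
          Nat.Coprime.coprime_dvd_right hm₁p
            (Nat.Coprime.pow_right _ ((Nat.coprime_primes hq hp).mpr hqne))
        have hdvdn : q * orderOf t₁ ∣ orderOf c :=
          Nat.Coprime.mul_dvd_of_dvd_of_dvd hcop hqn (hm₁dvd.trans hm₂n)
        obtain ⟨z, hzc, hzord⟩ := exists_orderOf_eq_of_dvd' (c := c) hdvdn
        have ht₁c : t₁ ∈ zpowers c := hc2 ht₁z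
        have ht₁inz : t₁ ∈ zpowers z :=
          mem_zpowers_of_orderOf_dvd ht₁c hzc (by rw [hzord]; exact dvd_mul_left _ _)
        have hzN : z ∈ Nbar t₂ := by
          rw [hNt₂, ← hNt₁]; exact Or.inr (zpowers_le.mpr ht₁inz)
        rcases hzN with h | h
        · have hqm : q * orderOf t₁ ∣ p ^ r := by
            rw [← hzord, ← hm₂]; exact orderOf_dvd_of_mem_zpowers (h (mem_zpowers z))
          have hq' : q ∣ p ^ r := dvd_trans (dvd_mul_right q _) hqm
          exact hqne ((Nat.prime_dvd_prime_iff_eq hq hp).mp (hq.dvd_of_dvd_pow hq'))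
        · have hdd : p ^ r ∣ q * orderOf t₁ := by
            rw [← hm₂, ← hzord]; exact orderOf_dvd_of_mem_zpowers (h (mem_zpowers t₂))
          have hcop2 : Nat.Coprime (p ^ r) q :=
            Nat.Coprime.pow_left _ ((Nat.coprime_primes hp hq).mpr (fun h' => hqne h'.symm))
          have hprm : p ^ r ∣ orderOf t₁ := hcop2.dvd_of_dvd_mul_left hdd
          have := Nat.le_of_dvd (horder_pos t₁) hprm
          omega
      have hn0 : orderOf c ≠ 0 := (horder_pos c).ne'
      have hpow := Nat.eq_prime_pow_of_unique_prime_dvd hn0 (fun hdq hdn => hqp hdq hdn)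
      set v := (orderOf c).primeFactorsList.length with hv
      have hrv : r < v := by
        have hdvd : p ^ r ∣ p ^ v := by rw [← hm₂, ← hpow]; exact hm₂n
        have hle : r ≤ v := (Nat.pow_dvd_pow_iff_le_right hp.one_lt).mp hdvd
        rcases lt_or_eq_of_le hle with h | h
        · exact h
        · exfalso
          have : orderOf c = p ^ r := by rw [hpow, h]
          omega
      have h1 : (cls a).ncard ≤ p ^ r := by
        have hsub : cls a ⊆ (zpowers t₂ : Set G) := fun t ht => hmemz t ht
        have hmono := Set.ncard_le_ncard hsub (Set.toFinite _)
        have hcard : (zpowers t₂ : Set G).ncard = p ^ r := by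
          rw [← Nat.card_coe_set_eq, SetLike.coe_sort_coe, Nat.card_zpowers, hm₂]
        omega
      have h2 : p ^ r ≤ (orderOf c).totient := by
        rw [hpow, Nat.totient_prime_pow hp (by omega : 0 < v)]
        have hle1 : p ^ r ≤ p ^ (v - 1) := Nat.pow_le_pow_right hp.pos (by omega)
        have hp1 : 1 ≤ p - 1 := by have := hp.one_lt; omega
        calc p ^ r ≤ p ^ (v-1) := hle1
          _ ≤ p ^ (v-1) * (p-1) := Nat.le_mul_of_pos_right _ (by omega)
      omega

end Main

theorem stmt17 {G : Type*} [Group G] [Finite G] (hnc : ¬ IsCyclic G)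
    (a b c : G) (hne : a ≠ b)
    (ha : a ∈ Subgroup.zpowers c) (hb : b ∈ Subgroup.zpowers c) :
    max (Ncount a) (Ncount b) ≤ Ncount c ∧
      (c ≠ a → padj a c) ∧ (c ≠ b → padj b c) := by
  refine ⟨max_le (Ncount_mono hnc ha) (Ncount_mono hnc hb),
    fun hca => ⟨fun h => hca h.symm, Or.inl (Subgroup.zpowers_le.mpr ha)⟩,
    fun hcb => ⟨fun h => hcb h.symm, Or.inl (Subgroup.zpowers_le.mpr hb)⟩⟩
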